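/- Surjectivity of reduction maps for ideal frames: for every g ∈ G, Q g * Π * Q g = (Fintype.card G : ℂ)⁻¹ • Q g. (Equivalently, the Page–Wootters reduction map R_R^g of an ideal quantum reference frame satisfies R_R^g (R_R^g)† = I_S, so its image is all of the system Hilbert space.) -/

import Mathlib

open scoped Kronecker
open Matrix

lemma sandwich_vecMulVec {r : ℕ} (x : Fin r → ℂ) (M : Matrix (Fin r) (Fin r) ℂ) :
    vecMulVec x (star x) * M * vecMulVec x (star x)
      = (star x ⬝ᵥ M.mulVec x) • vecMulVec x (star x) := by
  ext i j
  simp only [Matrix.mul_apply, vecMulVec_apply, Matrix.smul_apply, Matrix.mulVec,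
    dotProduct, Finset.sum_mul, Finset.mul_sum, Pi.star_apply, smul_eq_mul]
  rw [Finset.sum_comm]
  refine Finset.sum_congr rfl fun k _ => Finset.sum_congr rfl fun l _ => by ring

/-- **Surjectivity of reduction maps for ideal frames.**  For an ideal QRF
(orthonormal orientation basis), for every `g ∈ G` one has
`Q g * Π * Q g = |G|⁻¹ • Q g`, i.e. the Page–Wootters reduction maps satisfy
`R_R^g (R_R^g)† = I_S` and hence are surjective onto the system Hilbert space. -/
theorem reduction_map_surjective_ideal
    {G : Type*} [Group G] [Fintype G] [DecidableEq G] {r s : ℕ}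
    (U_R : G → Matrix (Fin r) (Fin r) ℂ)
    (U_S : G → Matrix (Fin s) (Fin s) ℂ)
    (hR_mul : ∀ g h : G, U_R (g * h) = U_R g * U_R h)
    (hR_one : U_R 1 = 1)
    (hR_unitary : ∀ g : G, (U_R g)ᴴ * U_R g = 1)
    (hS_mul : ∀ g h : G, U_S (g * h) = U_S g * U_S h)
    (hS_one : U_S 1 = 1)
    (hS_unitary : ∀ g : G, (U_S g)ᴴ * U_S g = 1)
    (φ : G → (Fin r → ℂ))
    (hcov : ∀ g h : G, (U_R h).mulVec (φ g) = φ (h * g))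
    (horth : ∀ g h : G,
      (∑ i : Fin r, star (φ g i) * φ h i) = if g = h then 1 else 0)
    (hcomplete : ∑ g : G, Matrix.vecMulVec (φ g) (star (φ g))
        = (1 : Matrix (Fin r) (Fin r) ℂ))
    (Pg : Matrix (Fin r × Fin s) (Fin r × Fin s) ℂ)
    (hPg : Pg = (Fintype.card G : ℂ)⁻¹ • ∑ g : G, (U_R g) ⊗ₖ (U_S g))
    (Q : G → Matrix (Fin r × Fin s) (Fin r × Fin s) ℂ)
    (hQ : ∀ g : G, Q g = (Matrix.vecMulVec (φ g) (star (φ g))) ⊗ₖ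
        (1 : Matrix (Fin s) (Fin s) ℂ)) :
    ∀ g : G, Q g * Pg * Q g = (Fintype.card G : ℂ)⁻¹ • Q g := by
  intro g
  set P := Matrix.vecMulVec (φ g) (star (φ g)) with hP
  have hdot : ∀ h : G, star (φ g) ⬝ᵥ (U_R h).mulVec (φ g) = if h = 1 then (1 : ℂ) else 0 := by
    intro h
    rw [hcov]
    have := horth g (h * g)
    simp only [dotProduct, Pi.star_apply]
    rw [this]
    congr 1
    simp [eq_comm, right_eq_mul (a := h) (b := g), eq_comm]
  rw [hQ g, hPg, Matrix.mul_smul, Matrix.smul_mul]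
  congr 1
  rw [Matrix.mul_sum, Matrix.sum_mul]
  have hterm : ∀ h : G,
      (P ⊗ₖ (1 : Matrix (Fin s) (Fin s) ℂ)) * (U_R h ⊗ₖ U_S h) *
        (P ⊗ₖ (1 : Matrix (Fin s) (Fin s) ℂ))
      = if h = 1 then P ⊗ₖ (1 : Matrix (Fin s) (Fin s) ℂ) else 0 := by
    intro h
    rw [← Matrix.mul_kronecker_mul, ← Matrix.mul_kronecker_mul, sandwich_vecMulVec, hdot h,
      Matrix.one_mul, Matrix.mul_one]
    split_ifs with hh
    · subst hh; rw [hS_one, one_smul]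
    · rw [zero_smul, Matrix.zero_kronecker]
  simp only [← hP, hterm]
  simp
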